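/- If ρ_a < ρ and ρ_a < 1/(|s|·a_1), then the series Σ_{n≥1} a_n ρ_a^n converges to a finite value; that is, A(ρ_a) < ∞. (Under these hypotheses ρ_a is finite.) -/

import Mathlib

open scoped BigOperators ENNReal NNReal

/-- The radius of convergence of the power series with real coefficients `c`. -/
noncomputable def seriesRadius (c : ℕ → ℝ) : ℝ≥0∞ :=
  ⨆ (r : ℝ≥0) (_ : Summable fun n => |c n| * (r : ℝ) ^ n), (r : ℝ≥0∞)


private lemma fact_geom (j k : ℕ) : k.factorial * (k+1)^j ≤ (j+k).factorial := by
  induction j with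
  | zero => simp
  | succ j ih =>
      have h1 : (j+k).factorial * (k+1) ≤ (j+k).factorial * (j+k+1) := by
        apply Nat.mul_le_mul_left
        omega
      calc k.factorial * (k+1)^(j+1) = (k.factorial * (k+1)^j) * (k+1) := by ring
        _ ≤ (j+k).factorial * (k+1) := Nat.mul_le_mul_right _ ih
        _ ≤ (j+k).factorial * (j+k+1) := h1
        _ = (j+k+1).factorial := by rw [Nat.factorial_succ]; ring
        _ = (j+1+k).factorial := by congr 1; omega

private lemma natN1 (j k : ℕ) (hj : 1 ≤ j) (hjk : j ≤ k) : k * j^j ≤ j * (k+1)^j := by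
  have h1 : j * j^(j-1) = j^j := by
    rw [← pow_succ']; congr 1; omega
  have hk1 : (k+1) * (k+1)^(j-1) = (k+1)^j := by
    rw [← pow_succ']; congr 1; omega
  have h2 : j^(j-1) ≤ (k+1)^(j-1) := Nat.pow_le_pow_left (by omega) _
  calc k * j^j = k * (j * j^(j-1)) := by rw [h1]
    _ ≤ k * (j * (k+1)^(j-1)) := Nat.mul_le_mul_left _ (Nat.mul_le_mul_left _ h2)
    _ = j * (k * (k+1)^(j-1)) := by ring
    _ ≤ j * ((k+1) * (k+1)^(j-1)) :=
        Nat.mul_le_mul_left _ (Nat.mul_le_mul_right _ (by omega))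
    _ = j * (k+1)^j := by rw [hk1]

private lemma natN2 (j k : ℕ) (hk : 2 ≤ k) (hkj : k ≤ j) : j^2 * k^k ≤ k^2 * (j+1)^k := by
  have h1 : k^2 * k^(k-2) = k^k := pow_mul_pow_sub k hk
  have hj1 : (j+1)^2 * (j+1)^(k-2) = (j+1)^k := pow_mul_pow_sub _ hk
  have h2 : k^(k-2) ≤ (j+1)^(k-2) := Nat.pow_le_pow_left (by omega) _
  have h3 : j^2 ≤ (j+1)^2 := Nat.pow_le_pow_left (by omega) _
  calc j^2 * k^k = j^2 * (k^2 * k^(k-2)) := by rw [h1]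
    _ ≤ (j+1)^2 * (k^2 * (j+1)^(k-2)) := Nat.mul_le_mul h3 (Nat.mul_le_mul_left _ h2)
    _ = k^2 * ((j+1)^2 * (j+1)^(k-2)) := by ring
    _ = k^2 * (j+1)^k := by rw [hj1]
private lemma natL1 (j k : ℕ) (hj : 1 ≤ j) (hjk : j ≤ k) :
    j * (j.factorial * k.factorial) * (j^j * k) ≤ (j.factorial * j^2) * (j+k).factorial := by
  calc j * (j.factorial * k.factorial) * (j^j * k)
      = (j.factorial * k.factorial) * j * (k * j^j) := by ring
    _ ≤ (j.factorial * k.factorial) * j * (j * (k+1)^j) :=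
        Nat.mul_le_mul_left _ (natN1 j k hj hjk)
    _ = (j.factorial * j^2) * (k.factorial * (k+1)^j) := by ring
    _ ≤ (j.factorial * j^2) * (j+k).factorial :=
        Nat.mul_le_mul_left _ (fact_geom j k)

private lemma natL2 (j k : ℕ) (hk : 2 ≤ k) (hkj : k ≤ j) :
    j * (j.factorial * k.factorial) * (k^k * j) ≤ (k.factorial * k^2) * (j+k).factorial := by
  calc j * (j.factorial * k.factorial) * (k^k * j)
      = (k.factorial * j.factorial) * (j^2 * k^k) := by ring
    _ ≤ (k.factorial * j.factorial) * (k^2 * (j+1)^k) :=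
        Nat.mul_le_mul_left _ (natN2 j k hk hkj)
    _ = (k.factorial * k^2) * (j.factorial * (j+1)^k) := by ring
    _ ≤ (k.factorial * k^2) * (k+j).factorial :=
        Nat.mul_le_mul_left _ (fact_geom k j)
    _ = (k.factorial * k^2) * (j+k).factorial := by rw [Nat.add_comm k j]

private lemma realL1 (j k : ℕ) (hj : 1 ≤ j) (hjk : j ≤ k) :
    (j : ℝ) * ((j.factorial : ℝ) * k.factorial / (j+k).factorial)
      ≤ ((j.factorial : ℝ) * j^2 / j^j) / k := by
  have hj0 : (0:ℝ) < j := by exact_mod_cast hj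
  have hk0 : (0:ℝ) < k := by exact_mod_cast hj.trans hjk
  have hfac : (0:ℝ) < ((j+k).factorial : ℝ) := by exact_mod_cast (j+k).factorial_pos
  rw [div_div, mul_div_assoc']
  rw [div_le_div_iff₀ hfac (by positivity)]
  have := natL1 j k hj hjk
  calc (j : ℝ) * ((j.factorial : ℝ) * k.factorial) * ((j:ℝ)^j * k)
      = ((j * (j.factorial * k.factorial) * (j^j * k) : ℕ) : ℝ) := by push_cast; ring
    _ ≤ (((j.factorial * j^2) * (j+k).factorial : ℕ) : ℝ) := by exact_mod_cast this
    _ = (j.factorial : ℝ) * j^2 * ((j+k).factorial : ℝ) := by push_cast; ring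

private lemma realL2 (j k : ℕ) (hk : 2 ≤ k) (hkj : k ≤ j) :
    (j : ℝ) * ((j.factorial : ℝ) * k.factorial / (j+k).factorial)
      ≤ ((k.factorial : ℝ) * k^2 / k^k) / j := by
  have hk0 : (0:ℝ) < k := by exact_mod_cast Nat.lt_of_lt_of_le Nat.zero_lt_two hk
  have hj0 : (0:ℝ) < j := hk0.trans_le (by exact_mod_cast hkj)
  have hfac : (0:ℝ) < ((j+k).factorial : ℝ) := by exact_mod_cast (j+k).factorial_pos
  rw [div_div, mul_div_assoc']
  rw [div_le_div_iff₀ hfac (by positivity)]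
  have := natL2 j k hk hkj
  calc (j : ℝ) * ((j.factorial : ℝ) * k.factorial) * ((k:ℝ)^k * j)
      = ((j * (j.factorial * k.factorial) * (k^k * j) : ℕ) : ℝ) := by push_cast; ring
    _ ≤ (((k.factorial * k^2) * (j+k).factorial : ℕ) : ℝ) := by exact_mod_cast this
    _ = (k.factorial : ℝ) * k^2 * ((j+k).factorial : ℝ) := by push_cast; ring

private lemma realN4 (j : ℕ) (hj : 1 ≤ j) : 2 * (j:ℝ)^j ≤ ((j:ℝ)+1)^j := by
  have hj0 : (0:ℝ) < j := by exact_mod_cast hj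
  have hge : (-2:ℝ) ≤ 1/(j:ℝ) := by
    have : (0:ℝ) ≤ 1/(j:ℝ) := by positivity
    linarith
  have h := one_add_mul_le_pow hge j
  have h1 : (1 : ℝ) + j * (1/j) = 2 := by field_simp; norm_num
  rw [h1] at h
  have h2 : ((1:ℝ) + 1/j)^j = ((j:ℝ)+1)^j / (j:ℝ)^j := by
    rw [← div_pow]
    congr 1
    field_simp
  rw [h2, le_div_iff₀ (by positivity)] at h
  linarith

private lemma realN3 (j : ℕ) (hj : 1 ≤ j) :
    (j.factorial : ℝ) * 2^j ≤ 2 * (j:ℝ)^j := by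
  induction j, hj using Nat.le_induction with
  | base => norm_num
  | succ j hj ih =>
      have h4 := realN4 j hj
      have hfac : ((j+1).factorial : ℝ) = ((j:ℝ)+1) * j.factorial := by
        rw [Nat.factorial_succ]; push_cast; ring
      have hj0 : (0:ℝ) ≤ (j:ℝ) + 1 := by positivity
      have hcast : ((j+1 : ℕ) : ℝ) = (j:ℝ) + 1 := by push_cast; ring
      rw [hcast, hfac]
      calc ((j:ℝ)+1) * (j.factorial : ℝ) * 2^(j+1)
          = ((j:ℝ)+1) * 2 * ((j.factorial : ℝ) * 2^j) := by ring
        _ ≤ ((j:ℝ)+1) * 2 * (2 * (j:ℝ)^j) := by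
            apply mul_le_mul_of_nonneg_left ih (by positivity)
        _ = ((j:ℝ)+1) * 2 * (2 * (j:ℝ)^j) := by ring
        _ ≤ ((j:ℝ)+1) * 2 * (((j:ℝ)+1)^j) := by
            apply mul_le_mul_of_nonneg_left h4 (by positivity)
        _ = 2 * ((j:ℝ)+1)^(j+1) := by rw [pow_succ]; ring
private lemma mid_bound (S : ℝ) (hS : 1 ≤ S) (sg : ℝ) (hsg : -1 ≤ sg)
    (j k : ℕ) (hj : 1 ≤ j) (hk : 2 ≤ k) :
    (S * j - sg) * ((j.factorial:ℝ) * (k.factorial:ℝ) / ((j+k).factorial:ℝ))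
      ≤ ((S+1) * ((j.factorial:ℝ) * j^2 / j^j)) / k
        + ((S+1) * ((k.factorial:ℝ) * k^2 / k^k)) / j := by
  have hA0 : (0:ℝ) < S + 1 := by linarith
  have hjR : (1:ℝ) ≤ (j:ℝ) := by exact_mod_cast hj
  have hcoeff : S * j - sg ≤ (S+1) * j := by nlinarith
  have hfrac0 : (0:ℝ) ≤ (j.factorial:ℝ) * (k.factorial:ℝ) / ((j+k).factorial:ℝ) := by
    positivity
  have hterm2 : (0:ℝ) ≤ ((S+1) * ((k.factorial:ℝ) * k^2 / k^k)) / j := by positivity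
  have hterm1 : (0:ℝ) ≤ ((S+1) * ((j.factorial:ℝ) * j^2 / j^j)) / k := by positivity
  rcases le_or_gt j k with h | h
  · have step1 : (S * j - sg) * ((j.factorial:ℝ) * (k.factorial:ℝ) / ((j+k).factorial:ℝ))
        ≤ ((S+1) * j) * ((j.factorial:ℝ) * (k.factorial:ℝ) / ((j+k).factorial:ℝ)) :=
      mul_le_mul_of_nonneg_right hcoeff hfrac0
    have step2 : ((S+1) * j) * ((j.factorial:ℝ) * (k.factorial:ℝ) / ((j+k).factorial:ℝ))
        ≤ (S+1) * (((j.factorial : ℝ) * j^2 / j^j) / k) := by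
      rw [mul_assoc]
      exact mul_le_mul_of_nonneg_left (realL1 j k hj h) hA0.le
    have step3 : (S+1) * (((j.factorial : ℝ) * j^2 / j^j) / k)
        = ((S+1) * ((j.factorial:ℝ) * j^2 / j^j)) / k := by ring
    linarith
  · have step1 : (S * j - sg) * ((j.factorial:ℝ) * (k.factorial:ℝ) / ((j+k).factorial:ℝ))
        ≤ ((S+1) * j) * ((j.factorial:ℝ) * (k.factorial:ℝ) / ((j+k).factorial:ℝ)) :=
      mul_le_mul_of_nonneg_right hcoeff hfrac0
    have step2 : ((S+1) * j) * ((j.factorial:ℝ) * (k.factorial:ℝ) / ((j+k).factorial:ℝ))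
        ≤ (S+1) * (((k.factorial : ℝ) * k^2 / k^k) / j) := by
      rw [mul_assoc]
      exact mul_le_mul_of_nonneg_left (realL2 j k hk h.le) hA0.le
    have step3 : (S+1) * (((k.factorial : ℝ) * k^2 / k^k) / j)
        = ((S+1) * ((k.factorial:ℝ) * k^2 / k^k)) / j := by ring
    linarith

private lemma conv_le (f g : ℕ → ℝ) (hf : ∀ i, 0 ≤ f i) (hg : ∀ i, 0 ≤ g i) (N : ℕ) :
    ∑ n ∈ Finset.range N, ∑ j ∈ Finset.Ico 1 n, f j * g (n - j)
      ≤ (∑ j ∈ Finset.range N, f j) * (∑ m ∈ Finset.range N, g m) := by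
  have key : ∑ x ∈ (Finset.range N).sigma (fun n => Finset.Ico 1 n),
      f x.2 * g (x.1 - x.2) ≤ ∑ p ∈ Finset.range N ×ˢ Finset.range N, f p.1 * g p.2 := by
    have hinj : ∀ x ∈ (Finset.range N).sigma (fun n => Finset.Ico 1 n),
        ∀ y ∈ (Finset.range N).sigma (fun n => Finset.Ico 1 n),
        (fun x : Σ _ : ℕ, ℕ => (x.2, x.1 - x.2)) x
          = (fun x : Σ _ : ℕ, ℕ => (x.2, x.1 - x.2)) y → x = y := by
      rintro ⟨n, j⟩ hx ⟨m, i⟩ hy h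
      simp only [Finset.mem_sigma, Finset.mem_range, Finset.mem_Ico] at hx hy
      simp only [Prod.mk.injEq] at h
      obtain ⟨h1, h2⟩ := h
      have hnm : n = m := by omega
      subst hnm; subst h1; rfl
    calc ∑ x ∈ (Finset.range N).sigma (fun n => Finset.Ico 1 n), f x.2 * g (x.1 - x.2)
        = ∑ p ∈ ((Finset.range N).sigma (fun n => Finset.Ico 1 n)).image
            (fun x : Σ _ : ℕ, ℕ => (x.2, x.1 - x.2)), f p.1 * g p.2 := by
          rw [Finset.sum_image hinj]
      _ ≤ ∑ p ∈ Finset.range N ×ˢ Finset.range N, f p.1 * g p.2 := by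
          apply Finset.sum_le_sum_of_subset_of_nonneg
          · intro p hp
            simp only [Finset.mem_image] at hp
            obtain ⟨⟨n, j⟩, hx, rfl⟩ := hp
            simp only [Finset.mem_sigma, Finset.mem_range, Finset.mem_Ico] at hx
            simp only [Finset.mem_product, Finset.mem_range]
            omega
          · intro p _ _
            exact mul_nonneg (hf _) (hg _)
  rw [Finset.sum_mul_sum, ← Finset.sum_product', Finset.sum_sigma']
  exact key

private lemma shift_sum (b : ℕ → ℝ) (hb : ∀ i, 0 ≤ b i) (N : ℕ) :
    ∑ n ∈ Finset.Ico 2 N, b (n-1) ≤ ∑ m ∈ Finset.range N, b m := by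
  have h1 : ∑ n ∈ Finset.Ico 2 N, b (n-1) = ∑ m ∈ Finset.Ico 1 (N-1), b m := by
    apply Finset.sum_nbij' (fun n => n - 1) (fun m => m + 1)
    · intro x hx; simp only [Finset.mem_Ico] at *; omega
    · intro x hx; simp only [Finset.mem_Ico] at *; omega
    · intro x hx; simp only [Finset.mem_Ico] at hx; omega
    · intro x hx; simp only [Finset.mem_Ico] at hx; omega
    · intro x hx; rfl
  rw [h1]
  apply Finset.sum_le_sum_of_subset_of_nonneg
  · intro x hx
    simp only [Finset.mem_Ico] at hx
    simp only [Finset.mem_range]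
    omega
  · intro x _ _; exact hb x

private lemma core_bound (b ε v : ℕ → ℝ) (c F W : ℝ)
    (hb : ∀ n, 0 ≤ b n) (hε : ∀ n, 0 ≤ ε n) (hv : ∀ n, 0 ≤ v n)
    (hc0 : 0 ≤ c) (hc1 : c < 1)
    (hF : ∀ N, ∑ n ∈ Finset.range N, ε n ≤ F)
    (hW : ∀ N, ∑ j ∈ Finset.range N, v j ≤ W)
    (hb0 : b 0 = 0)
    (H : ∀ n, 2 ≤ n → b n ≤ ε n + c * b (n-1)
        + 2 * ∑ j ∈ Finset.Ico 1 n, v j * (b (n-j) / ((n-j : ℕ) : ℝ))) :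
    ∃ B, ∀ N, ∑ n ∈ Finset.range N, b n ≤ B := by
  have hW0 : 0 ≤ W := le_trans (by simp) (hW 0)
  have hF0 : 0 ≤ F := le_trans (by simp) (hF 0)
  have h1c : (0:ℝ) < 1 - c := by linarith
  set N₀ : ℕ := ⌈(4 * W) / (1 - c)⌉₊ + 1 with hN₀
  have hN₀pos : 0 < N₀ := Nat.succ_pos _
  have hN₀R : (0:ℝ) < N₀ := by exact_mod_cast hN₀pos
  have hN₀ge : 4 * W / (1 - c) ≤ (N₀ : ℝ) := by
    have h0 := Nat.le_ceil ((4 * W) / (1 - c))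
    have h2 : ((⌈(4 * W) / (1 - c)⌉₊ : ℝ)) ≤ N₀ := by rw [hN₀]; push_cast; linarith
    linarith
  have h2W : 2 * W / N₀ ≤ (1 - c) / 2 := by
    rw [div_le_iff₀ hN₀R]
    have h4 : 4 * W ≤ (N₀:ℝ) * (1 - c) := by
      have := (div_le_iff₀ h1c).mp hN₀ge
      linarith
    linarith
  set Q : ℝ := ∑ m ∈ Finset.range N₀, b m / m with hQ
  have hQ0 : 0 ≤ Q :=
    Finset.sum_nonneg (fun i _ => div_nonneg (hb i) (Nat.cast_nonneg i))
  refine ⟨(b 1 + F + 2 * W * Q) * (2 / (1 - c)), ?_⟩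
  intro N
  set S : ℝ := ∑ n ∈ Finset.range N, b n with hSdef
  have hS0 : 0 ≤ S := Finset.sum_nonneg (fun i _ => hb i)
  -- bound on ∑ b m / m
  have hAt : ∑ m ∈ Finset.range N, b m / m ≤ Q + S / N₀ := by
    by_cases hNN : N ≤ N₀
    · have hle : ∑ m ∈ Finset.range N, b m / m ≤ Q := by
        apply Finset.sum_le_sum_of_subset_of_nonneg (Finset.range_subset_range.mpr hNN)
        intro i _ _; exact div_nonneg (hb i) (Nat.cast_nonneg i)
      have hge : (0:ℝ) ≤ S / N₀ := div_nonneg hS0 (le_of_lt hN₀R)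
      linarith
    · push_neg at hNN
      have hsplit : ∑ m ∈ Finset.range N₀, (b m / m)
            + ∑ m ∈ Finset.Ico N₀ N, (b m / m) = ∑ m ∈ Finset.range N, b m / m :=
        Finset.sum_range_add_sum_Ico _ (le_of_lt hNN)
      have htail : ∑ m ∈ Finset.Ico N₀ N, b m / m ≤ S / N₀ := by
        have step : ∀ m ∈ Finset.Ico N₀ N, b m / m ≤ b m / N₀ := by
          intro m hm
          simp only [Finset.mem_Ico] at hm
          apply div_le_div_of_nonneg_left (hb m) hN₀R
          exact_mod_cast hm.1
        have hsub : ∑ m ∈ Finset.Ico N₀ N, b m ≤ S := by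
          apply Finset.sum_le_sum_of_subset_of_nonneg
          · intro x hx
            simp only [Finset.mem_Ico] at hx
            simp only [Finset.mem_range]; omega
          · intro x _ _; exact hb x
        calc ∑ m ∈ Finset.Ico N₀ N, b m / m ≤ ∑ m ∈ Finset.Ico N₀ N, b m / N₀ :=
              Finset.sum_le_sum step
          _ = (∑ m ∈ Finset.Ico N₀ N, b m) / N₀ := by rw [Finset.sum_div]
          _ ≤ S / N₀ := (div_le_div_iff_of_pos_right hN₀R).mpr hsub
      linarith
  -- main estimate
  by_cases hN2 : N ≤ 2
  · have hle : S ≤ b 0 + b 1 := by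
      have : S ≤ ∑ n ∈ Finset.range 2, b n := by
        apply Finset.sum_le_sum_of_subset_of_nonneg (Finset.range_subset_range.mpr hN2)
        intro i _ _; exact hb i
      simpa [Finset.sum_range_succ] using this
    rw [hb0] at hle
    have h2c : (1:ℝ) ≤ 2 / (1 - c) := by
      rw [le_div_iff₀ h1c]; linarith
    have hx0 : b 1 ≤ b 1 + F + 2 * W * Q := by nlinarith [mul_nonneg hW0 hQ0]
    have hx1 : (0:ℝ) ≤ b 1 + F + 2 * W * Q := le_trans (hb 1) hx0
    have hbig : b 1 + F + 2 * W * Q ≤ (b 1 + F + 2 * W * Q) * (2 / (1 - c)) :=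
      le_mul_of_one_le_right hx1 h2c
    linarith
  · push_neg at hN2
    have hsplit : ∑ n ∈ Finset.range 2, b n + ∑ n ∈ Finset.Ico 2 N, b n = S :=
      Finset.sum_range_add_sum_Ico _ (le_of_lt hN2)
    have hS2 : S = b 1 + ∑ n ∈ Finset.Ico 2 N, b n := by
      rw [← hsplit]
      simp [Finset.sum_range_succ, hb0]
    -- bound the Ico 2 N part
    have hmain : ∑ n ∈ Finset.Ico 2 N, b n
        ≤ F + c * S + 2 * (W * (Q + S / N₀)) := by
      have hstep : ∑ n ∈ Finset.Ico 2 N, b n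
          ≤ ∑ n ∈ Finset.Ico 2 N, (ε n + c * b (n-1)
            + 2 * ∑ j ∈ Finset.Ico 1 n, v j * (b (n-j) / ((n-j : ℕ) : ℝ))) := by
        apply Finset.sum_le_sum
        intro n hn
        simp only [Finset.mem_Ico] at hn
        exact H n hn.1
      rw [Finset.sum_add_distrib, Finset.sum_add_distrib] at hstep
      have hε' : ∑ n ∈ Finset.Ico 2 N, ε n ≤ F := by
        refine le_trans ?_ (hF N)
        apply Finset.sum_le_sum_of_subset_of_nonneg
        · intro x hx
          simp only [Finset.mem_Ico] at hx
          simp only [Finset.mem_range]; omega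
        · intro x _ _; exact hε x
      have hcS : ∑ n ∈ Finset.Ico 2 N, c * b (n-1) ≤ c * S := by
        rw [← Finset.mul_sum]
        exact mul_le_mul_of_nonneg_left (shift_sum b hb N) hc0
      have hdd : ∑ n ∈ Finset.Ico 2 N,
          (2 * ∑ j ∈ Finset.Ico 1 n, v j * (b (n-j) / ((n-j : ℕ) : ℝ)))
          ≤ 2 * (W * (Q + S / N₀)) := by
        rw [← Finset.mul_sum]
        have hinner : ∑ n ∈ Finset.Ico 2 N, ∑ j ∈ Finset.Ico 1 n, v j * (b (n-j) / ((n-j : ℕ) : ℝ))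
            ≤ W * (Q + S / N₀) := by
          have hext : ∑ n ∈ Finset.Ico 2 N, ∑ j ∈ Finset.Ico 1 n, v j * (b (n-j) / ((n-j : ℕ) : ℝ))
              ≤ ∑ n ∈ Finset.range N, ∑ j ∈ Finset.Ico 1 n, v j * (b (n-j) / ((n-j : ℕ) : ℝ)) := by
            apply Finset.sum_le_sum_of_subset_of_nonneg
            · intro x hx
              simp only [Finset.mem_Ico] at hx
              simp only [Finset.mem_range]; omega
            · intro x _ _
              apply Finset.sum_nonneg
              intro j _
              exact mul_nonneg (hv j) (div_nonneg (hb _) (Nat.cast_nonneg _))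
          have hconv := conv_le v (fun m => b m / m) hv
            (fun m => div_nonneg (hb m) (Nat.cast_nonneg m)) N
          have hprod : (∑ j ∈ Finset.range N, v j) * (∑ m ∈ Finset.range N, b m / m)
              ≤ W * (Q + S / N₀) := by
            apply mul_le_mul (hW N) hAt
            · exact Finset.sum_nonneg
                (fun i _ => div_nonneg (hb i) (Nat.cast_nonneg i))
            · exact hW0
          exact le_trans (le_trans hext hconv) hprod
        exact mul_le_mul_of_nonneg_left hinner (by norm_num)
      linarith
    -- combine
    have hexp : 2 * (W * (Q + S / N₀)) = 2 * W * Q + 2 * W * (S / N₀) := by ring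
    have hcomb : S ≤ b 1 + F + c * S + 2 * W * Q + 2 * W * (S / N₀) := by
      linarith [hmain, hS2, hexp]
    have hWS : 2 * W * (S / N₀) ≤ (1 - c) / 2 * S := by
      have heq : 2 * W * (S / N₀) = (2 * W / N₀) * S := by ring
      rw [heq]
      exact mul_le_mul_of_nonneg_right h2W hS0
    have hfin : S * ((1 - c) / 2) ≤ b 1 + F + 2 * W * Q := by linarith
    have hSeq : S = S * ((1 - c) / 2) * (2 / (1 - c)) := by
      field_simp
    rw [hSeq]
    apply mul_le_mul_of_nonneg_right hfin
    positivity
private lemma radius_extract {f : ℕ → ℝ} {x : ℝ≥0∞} (h : x < seriesRadius f) :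
    ∃ r : ℝ≥0, (Summable fun n => |f n| * (r:ℝ)^n) ∧ x < (r : ℝ≥0∞) := by
  rw [seriesRadius, lt_iSup_iff] at h
  obtain ⟨r, hr⟩ := h
  rw [lt_iSup_iff] at hr
  obtain ⟨hsum, hlt⟩ := hr
  exact ⟨r, hsum, hlt⟩

/-- If `ρ_a < ρ` and `ρ_a < 1/(|s|·a_1)`, then `A(ρ_a) < ∞`, i.e. the series
`Σ_{n≥1} a_n ρ_a^n` converges. -/
theorem A_at_radius_finite
    (s : ℤ) (hs : s ≠ 0)
    (p : ℕ → ℝ) (hp : ∀ k, 1 ≤ k → 0 ≤ p k)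
    (ρ : ℝ≥0∞)
    (hρ : ρ = seriesRadius fun k => if k = 0 then 0 else p k / (Nat.factorial k))
    (hρ0 : 0 < ρ)
    (hf : ∃ k, 1 ≤ k ∧ p k ≠ 0)
    (γ : ℕ → ℝ)
    (hγ : ∀ n, 1 ≤ n → γ n = p n +
      ∑ j ∈ Finset.Ico 1 n, ((|s| : ℝ) * j - (s.sign : ℝ)) * γ j * γ (n - j))
    (a : ℕ → ℝ) (ha : ∀ n, a n = if n = 0 then 0 else γ n / (Nat.factorial n))
    (ρa : ℝ≥0∞) (hρa : ρa = seriesRadius a)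
    (h1 : ρa < ρ)
    (h2 : ρa < (ENNReal.ofReal ((|s| : ℝ) * a 1))⁻¹) :
    Summable fun n => a n * ρa.toReal ^ n := by
  classical
  -- sign facts
  have hs1 : (1:ℝ) ≤ |(s : ℝ)| := by
    rw [← Int.cast_abs]
    exact_mod_cast Int.one_le_abs hs
  have hsgn : -1 ≤ ((s.sign : ℤ) : ℝ) ∧ ((s.sign : ℤ) : ℝ) ≤ 1 := by
    rcases lt_trichotomy s 0 with h | h | h
    · rw [Int.sign_eq_neg_one_iff_neg.mpr h]; norm_num
    · exact absurd h hs
    · rw [Int.sign_eq_one_iff_pos.mpr h]; norm_num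
  -- γ is nonnegative
  have hγnn : ∀ n, 1 ≤ n → 0 ≤ γ n := by
    intro n
    induction n using Nat.strong_induction_on with
    | _ n ih =>
      intro hn
      rw [hγ n hn]
      have h0 : 0 ≤ p n := hp n hn
      have hsum : 0 ≤ ∑ j ∈ Finset.Ico 1 n,
          ((|s| : ℝ) * j - (s.sign : ℝ)) * γ j * γ (n - j) := by
        apply Finset.sum_nonneg
        intro j hj
        simp only [Finset.mem_Ico] at hj
        have hj1 : (1:ℝ) ≤ (j:ℝ) := by exact_mod_cast hj.1
        have hcoeff : 0 ≤ (|s| : ℝ) * j - (s.sign : ℝ) := by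
          have h1j : (1:ℝ) ≤ |(s:ℝ)| * j := by
            calc (1:ℝ) = 1 * 1 := by norm_num
              _ ≤ |(s:ℝ)| * j := mul_le_mul hs1 hj1 zero_le_one (by linarith)
          linarith [hsgn.2]
        exact mul_nonneg (mul_nonneg hcoeff (ih j hj.2 hj.1))
          (ih (n-j) (by omega) (by omega))
      linarith
  -- a facts
  have ha0 : a 0 = 0 := by rw [ha]; simp
  have hann : ∀ n, 0 ≤ a n := by
    intro n
    rw [ha]
    by_cases h : n = 0
    · simp [h]
    · simp only [h, if_false]
      exact div_nonneg (hγnn n (by omega)) (by positivity)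
  have hγa : ∀ n, 1 ≤ n → γ n = (n.factorial : ℝ) * a n := by
    intro n hn
    have hne : n ≠ 0 := by omega
    rw [ha]
    simp only [hne, if_false]
    field_simp
  -- x0 setup
  have hρaTop : ρa ≠ ⊤ := h1.ne_top
  set x0 : ℝ := ρa.toReal with hx0def
  have hx0nn : 0 ≤ x0 := ENNReal.toReal_nonneg
  have hρaEq : ENNReal.ofReal x0 = ρa := ENNReal.ofReal_toReal hρaTop
  by_cases hx0z : x0 ≤ 0
  · have hx00 : x0 = 0 := le_antisymm hx0z hx0nn
    have heq : (fun n => a n * x0 ^ n) = (fun _ => (0:ℝ)) := by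
      funext n
      cases n with
      | zero => simp [ha0]
      | succ m => rw [hx00]; simp
    rw [heq]
    exact summable_zero
  push_neg at hx0z
  -- extraction from h1
  obtain ⟨r1, hsum1, hlt1⟩ := radius_extract (hρ ▸ h1)
  have hx0r1 : x0 < (r1:ℝ) := by
    have := (ENNReal.toReal_lt_toReal hρaTop ENNReal.coe_ne_top).mpr hlt1
    simpa using this
  set cf : ℕ → ℝ := fun k => if k = 0 then 0 else p k / (Nat.factorial k) with hcf
  set εf : ℕ → ℝ := fun n => |cf n| * x0 ^ n with hεfdef
  have hεnn : ∀ n, 0 ≤ εf n := fun n => mul_nonneg (abs_nonneg _) (by positivity)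
  have hεsum : Summable εf := by
    apply Summable.of_nonneg_of_le hεnn _ hsum1
    intro n
    exact mul_le_mul_of_nonneg_left (pow_le_pow_left₀ hx0nn hx0r1.le n) (abs_nonneg _)
  set F : ℝ := ∑' n, εf n with hFdef
  have hF : ∀ N, ∑ n ∈ Finset.range N, εf n ≤ F :=
    fun N => Summable.sum_le_tsum _ (fun i _ => hεnn i) hεsum
  -- extraction at half radius
  have hhalf : ENNReal.ofReal (x0/2) < ρa := by
    rw [← hρaEq]
    exact (ENNReal.ofReal_lt_ofReal_iff hx0z).mpr (by linarith)
  obtain ⟨r2, hsum2, hlt2⟩ := radius_extract (hρa ▸ hhalf)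
  have hr2half : x0/2 < (r2:ℝ) := by
    have := (ENNReal.toReal_lt_toReal ENNReal.ofReal_ne_top ENNReal.coe_ne_top).mpr hlt2
    simpa [ENNReal.toReal_ofReal (by linarith : (0:ℝ) ≤ x0/2)] using this
  have hr2pos : (0:ℝ) < r2 := by linarith
  -- b, θ, T
  set b : ℕ → ℝ := fun n => a n * x0 ^ n with hbdef
  have hbnn : ∀ n, 0 ≤ b n := fun n => mul_nonneg (hann n) (by positivity)
  set θ : ℝ := x0 / r2 with hθdef
  have hθ0 : 0 < θ := div_pos hx0z hr2pos
  have hθ2 : θ < 2 := by rw [hθdef, div_lt_iff₀ hr2pos]; linarith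
  set T : ℝ := ∑' n, |a n| * (r2:ℝ)^n with hTdef
  have hT0 : 0 ≤ T :=
    tsum_nonneg (fun n => mul_nonneg (abs_nonneg _) (by positivity))
  have hTb : ∀ n, b n ≤ T * θ ^ n := by
    intro n
    have h1' : |a n| * (r2:ℝ)^n ≤ T :=
      Summable.le_tsum hsum2 n (fun j _ => mul_nonneg (abs_nonneg _) (by positivity))
    rw [abs_of_nonneg (hann n)] at h1'
    have h2' : x0 ^ n = (r2:ℝ)^n * θ^n := by
      rw [← mul_pow]
      congr 1
      rw [hθdef]
      field_simp
    calc b n = (a n * (r2:ℝ)^n) * θ^n := by rw [hbdef]; dsimp only; rw [h2']; ring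
      _ ≤ T * θ^n := mul_le_mul_of_nonneg_right h1' (by positivity)
  -- the contraction constant
  set C : ℝ := |(s : ℝ)| * a 1 * x0 with hCdef
  have hC0 : 0 ≤ C := mul_nonneg (mul_nonneg (by linarith) (hann 1)) hx0nn
  have hC1 : C < 1 := by
    by_cases hq : |(s : ℝ)| * a 1 = 0
    · rw [hCdef, hq, zero_mul]; norm_num
    · have hqpos : 0 < |(s : ℝ)| * a 1 :=
        lt_of_le_of_ne (mul_nonneg (by linarith) (hann 1)) (Ne.symm hq)
      rw [← ENNReal.ofReal_inv_of_pos hqpos, ← hρaEq] at h2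
      have hlt : x0 < (|(s : ℝ)| * a 1)⁻¹ :=
        (ENNReal.ofReal_lt_ofReal_iff (by positivity)).mp h2
      calc C = x0 * (|(s : ℝ)| * a 1) := by rw [hCdef]; ring
        _ < (|(s : ℝ)| * a 1)⁻¹ * (|(s : ℝ)| * a 1) :=
            mul_lt_mul_of_pos_right hlt hqpos
        _ = 1 := inv_mul_cancel₀ hqpos.ne'
  -- weights
  set A : ℝ := |(s : ℝ)| + 1 with hAdef
  have hA0 : (0:ℝ) < A := by rw [hAdef]; linarith
  set w : ℕ → ℝ := fun j => A * ((j.factorial : ℝ) * (j:ℝ)^2 / (j:ℝ)^j) with hwdef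
  have hwnn : ∀ j, 0 ≤ w j := by
    intro j
    rw [hwdef]
    positivity
  set v : ℕ → ℝ := fun j => w j * b j with hvdef
  have hvnn : ∀ j, 0 ≤ v j := fun j => mul_nonneg (hwnn j) (hbnn j)
  have hq1 : θ/2 < 1 := by linarith
  have hvle : ∀ j, v j ≤ (2*A*T) * ((j:ℝ)^2 * (θ/2)^j) := by
    intro j
    by_cases hj : j = 0
    · subst hj
      have : v 0 = 0 := by rw [hvdef, hwdef]; norm_num
      rw [this]
      norm_num
    · have hj1 : 1 ≤ j := by omega
      have hjR : (0:ℝ) < (j:ℝ) := by exact_mod_cast Nat.pos_of_ne_zero hj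
      have h3 := realN3 j hj1
      have hfr : (j.factorial:ℝ) * (j:ℝ)^2 / (j:ℝ)^j ≤ 2 * (j:ℝ)^2 / 2^j := by
        rw [div_le_div_iff₀ (by positivity) (by positivity)]
        calc (j.factorial:ℝ) * (j:ℝ)^2 * 2^j = ((j.factorial:ℝ) * 2^j) * (j:ℝ)^2 := by ring
          _ ≤ (2 * (j:ℝ)^j) * (j:ℝ)^2 := mul_le_mul_of_nonneg_right h3 (by positivity)
          _ = 2 * (j:ℝ)^2 * (j:ℝ)^j := by ring
      have hble := hTb j
      calc v j = (A * ((j.factorial : ℝ) * (j:ℝ)^2 / (j:ℝ)^j)) * b j := by rw [hvdef, hwdef]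
        _ ≤ (A * ((j.factorial : ℝ) * (j:ℝ)^2 / (j:ℝ)^j)) * (T * θ^j) := by
            apply mul_le_mul_of_nonneg_left hble
            positivity
        _ ≤ (A * (2 * (j:ℝ)^2 / 2^j)) * (T * θ^j) := by
            apply mul_le_mul_of_nonneg_right _ (by positivity)
            exact mul_le_mul_of_nonneg_left hfr hA0.le
        _ = (2*A*T) * ((j:ℝ)^2 * (θ/2)^j) := by
            rw [div_pow θ 2 j]
            ring
  have hmaj : Summable (fun j : ℕ => (2*A*T) * ((j:ℝ)^2 * (θ/2)^j)) := by
    apply Summable.mul_left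
    have hnorm : ‖θ/2‖ < 1 := by
      rw [Real.norm_eq_abs, abs_of_nonneg (by linarith : (0:ℝ) ≤ θ/2)]
      exact hq1
    have := summable_pow_mul_geometric_of_norm_lt_one 2 hnorm
    simpa using this
  have hvsum : Summable v := Summable.of_nonneg_of_le hvnn hvle hmaj
  set W : ℝ := ∑' j, v j with hWdef
  have hW : ∀ N, ∑ j ∈ Finset.range N, v j ≤ W :=
    fun N => Summable.sum_le_tsum _ (fun i _ => hvnn i) hvsum
  -- the key recursion inequality
  have H : ∀ n, 2 ≤ n → b n ≤ εf n + C * b (n-1)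
      + 2 * ∑ j ∈ Finset.Ico 1 n, v j * (b (n-j) / ((n-j : ℕ) : ℝ)) := by
    intro n hn
    obtain ⟨m, rfl⟩ : ∃ m, n = m + 2 := ⟨n - 2, by omega⟩
    have hfacpos : (0:ℝ) < (((m+2).factorial : ℕ) : ℝ) := by
      exact_mod_cast (m+2).factorial_pos
    -- value of εf
    have hεval : εf (m+2) = (p (m+2) / (((m+2).factorial : ℕ):ℝ)) * x0^(m+2) := by
      show |cf (m+2)| * x0^(m+2) = _
      have hcfv : cf (m+2) = p (m+2) / (((m+2).factorial : ℕ):ℝ) := by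
        rw [hcf]
        exact if_neg (by omega)
      rw [hcfv, abs_of_nonneg (div_nonneg (hp _ (by omega)) hfacpos.le)]
    -- expansion of b (m+2) from the recursion
    have hbneq : b (m+2) = εf (m+2)
        + ∑ j ∈ Finset.Ico 1 (m+2),
            ((|(s : ℝ)| * j - (s.sign : ℝ)) * γ j * γ (m+2-j))
              * (x0^(m+2) / (((m+2).factorial : ℕ):ℝ)) := by
      have haneq : a (m+2) = γ (m+2) / (((m+2).factorial:ℕ):ℝ) := by
        rw [ha]
        exact if_neg (by omega)
      have hbv : b (m+2) = (γ (m+2) / (((m+2).factorial:ℕ):ℝ)) * x0^(m+2) := by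
        show a (m+2) * x0^(m+2) = _
        rw [haneq]
      rw [hbv, hγ (m+2) (by omega), add_div, add_mul]
      congr 1
      · rw [hεval]
      · rw [Finset.sum_div, Finset.sum_mul]
        apply Finset.sum_congr rfl
        intro j hj
        ring
    -- split off the top term j = m+1
    have hsum_split : ∑ j ∈ Finset.Ico 1 (m+2),
        ((|(s : ℝ)| * j - (s.sign : ℝ)) * γ j * γ (m+2-j))
          * (x0^(m+2) / (((m+2).factorial : ℕ):ℝ))
        = (∑ j ∈ Finset.Ico 1 (m+1),
            ((|(s : ℝ)| * j - (s.sign : ℝ)) * γ j * γ (m+2-j))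
              * (x0^(m+2) / (((m+2).factorial : ℕ):ℝ)))
          + ((|(s : ℝ)| * (m+1 : ℕ) - (s.sign : ℝ)) * γ (m+1) * γ (m+2-(m+1)))
              * (x0^(m+2) / (((m+2).factorial : ℕ):ℝ)) :=
      Finset.sum_Ico_succ_top (by omega) _
    -- edge term bound
    have hedge : ((|(s : ℝ)| * (m+1 : ℕ) - (s.sign : ℝ)) * γ (m+1) * γ (m+2-(m+1)))
        * (x0^(m+2) / (((m+2).factorial : ℕ):ℝ)) ≤ C * b (m+1) := by
      have h21 : m+2-(m+1) = 1 := by omega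
      rw [h21]
      have hγ1 : γ 1 = a 1 := by
        rw [hγa 1 le_rfl]
        norm_num
      have hγm1 : γ (m+1) = (((m+1).factorial:ℕ):ℝ) * a (m+1) := hγa (m+1) (by omega)
      have hfact : (((m+2).factorial:ℕ):ℝ) = ((m+2:ℕ):ℝ) * (((m+1).factorial:ℕ):ℝ) := by
        rw [show (m+2) = (m+1)+1 from rfl, Nat.factorial_succ]
        push_cast
        ring
      have hfpos : (0:ℝ) < (((m+1).factorial:ℕ):ℝ) := by
        exact_mod_cast (m+1).factorial_pos
      have hm2pos : (0:ℝ) < ((m+2:ℕ):ℝ) := by positivity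
      have heq : ((|(s : ℝ)| * (m+1:ℕ) - (s.sign : ℝ)) * γ (m+1) * γ 1)
            * (x0^(m+2) / (((m+2).factorial:ℕ):ℝ))
          = ((|(s : ℝ)| * (m+1:ℕ) - (s.sign:ℝ)) / ((m+2:ℕ):ℝ)) * (b (m+1) * (a 1 * x0)) := by
        rw [hγ1, hγm1, hfact]
        have hb1 : b (m+1) = a (m+1) * x0^(m+1) := rfl
        rw [hb1]
        have hxp : x0^(m+2) = x0^(m+1) * x0 := by rw [← pow_succ]
        rw [hxp]
        field_simp
      rw [heq]
      have hcoeffle : (|(s : ℝ)| * (m+1:ℕ) - (s.sign:ℝ)) / ((m+2:ℕ):ℝ) ≤ |(s : ℝ)| := by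
        rw [div_le_iff₀ hm2pos]
        push_cast
        have hexp : |(s:ℝ)| * ((m:ℝ)+2) = |(s:ℝ)| * ((m:ℝ)+1) + |(s:ℝ)| := by ring
        rw [hexp]
        linarith [hsgn.1, hs1]
      have hbx : 0 ≤ b (m+1) * (a 1 * x0) :=
        mul_nonneg (hbnn _) (mul_nonneg (hann 1) hx0nn)
      calc ((|(s : ℝ)| * (m+1:ℕ) - (s.sign:ℝ)) / ((m+2:ℕ):ℝ)) * (b (m+1) * (a 1 * x0))
          ≤ |(s : ℝ)| * (b (m+1) * (a 1 * x0)) := mul_le_mul_of_nonneg_right hcoeffle hbx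
        _ = C * b (m+1) := by rw [hCdef]; ring
    -- middle terms bound
    have hmidj : ∀ j ∈ Finset.Ico 1 (m+1),
        ((|(s : ℝ)| * j - (s.sign : ℝ)) * γ j * γ (m+2-j))
            * (x0^(m+2) / (((m+2).factorial:ℕ):ℝ))
          ≤ v j * (b (m+2-j) / ((m+2-j : ℕ) : ℝ)) + v (m+2-j) * (b j / (j : ℝ)) := by
      intro j hj
      simp only [Finset.mem_Ico] at hj
      set k := m + 2 - j with hkdef
      have hk2 : 2 ≤ k := by omega
      have hj1 : 1 ≤ j := hj.1
      have hjk : j + k = m + 2 := by omega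
      have hγj : γ j = ((j.factorial:ℕ):ℝ) * a j := hγa j hj1
      have hγk : γ k = ((k.factorial:ℕ):ℝ) * a k := hγa k (by omega)
      have hxp : x0^(m+2) = x0^j * x0^k := by rw [← pow_add, hjk]
      have hfc : (((m+2).factorial:ℕ):ℝ) = (((j+k).factorial:ℕ):ℝ) := by rw [hjk]
      have hjfpos : (0:ℝ) < ((j.factorial:ℕ):ℝ) := by exact_mod_cast j.factorial_pos
      have hkfpos : (0:ℝ) < ((k.factorial:ℕ):ℝ) := by exact_mod_cast k.factorial_pos
      have hjkfpos : (0:ℝ) < (((j+k).factorial:ℕ):ℝ) := by exact_mod_cast (j+k).factorial_pos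
      have heq : ((|(s : ℝ)| * j - (s.sign : ℝ)) * γ j * γ k)
            * (x0^(m+2) / (((m+2).factorial:ℕ):ℝ))
          = ((|(s : ℝ)| * j - (s.sign:ℝ))
              * (((j.factorial:ℕ):ℝ) * ((k.factorial:ℕ):ℝ) / (((j+k).factorial:ℕ):ℝ)))
            * (b j * b k) := by
        rw [hγj, hγk, hfc, hxp]
        have hbj : b j = a j * x0^j := rfl
        have hbk : b k = a k * x0^k := rfl
        rw [hbj, hbk]
        field_simp
      rw [heq]
      have hmb := mid_bound |(s : ℝ)| hs1 ((s.sign : ℤ):ℝ) hsgn.1 j k hj1 hk2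
      have hbb : 0 ≤ b j * b k := mul_nonneg (hbnn j) (hbnn k)
      have hstep := mul_le_mul_of_nonneg_right hmb hbb
      calc ((|(s : ℝ)| * j - (s.sign:ℝ))
              * (((j.factorial:ℕ):ℝ) * ((k.factorial:ℕ):ℝ) / (((j+k).factorial:ℕ):ℝ)))
            * (b j * b k)
          ≤ (((|(s : ℝ)|+1) * ((j.factorial:ℕ):ℝ) * ((j:ℝ))^2 / ((j:ℝ))^j / (k:ℝ))
              + ((|(s : ℝ)|+1) * ((k.factorial:ℕ):ℝ) * ((k:ℝ))^2 / ((k:ℝ))^k / (j:ℝ)))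
            * (b j * b k) := by
            refine mul_le_mul_of_nonneg_right ?_ hbb
            calc (|(s : ℝ)| * j - (s.sign:ℝ))
                  * (((j.factorial:ℕ):ℝ) * ((k.factorial:ℕ):ℝ) / (((j+k).factorial:ℕ):ℝ))
                ≤ ((|(s : ℝ)|+1) * (((j.factorial:ℕ):ℝ) * ((j:ℝ))^2 / ((j:ℝ))^j)) / (k:ℝ)
                  + ((|(s : ℝ)|+1) * (((k.factorial:ℕ):ℝ) * ((k:ℝ))^2 / ((k:ℝ))^k)) / (j:ℝ) := hmb
              _ = (((|(s : ℝ)|+1) * ((j.factorial:ℕ):ℝ) * ((j:ℝ))^2 / ((j:ℝ))^j / (k:ℝ))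
                  + ((|(s : ℝ)|+1) * ((k.factorial:ℕ):ℝ) * ((k:ℝ))^2 / ((k:ℝ))^k / (j:ℝ))) := by
                  ring
        _ = v j * (b k / ((k:ℕ):ℝ)) + v k * (b j / ((j:ℕ):ℝ)) := by
            simp only [hvdef, hwdef, hAdef]
            ring
    -- reflection identity
    have hrefl : ∑ j ∈ Finset.Ico 1 (m+2), v (m+2-j) * (b j / ((j:ℕ):ℝ))
        = ∑ j ∈ Finset.Ico 1 (m+2), v j * (b (m+2-j) / ((m+2-j:ℕ):ℝ)) := by
      have h0 : ∀ j ∈ Finset.Ico 1 (m+2),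
          v (m+2-j) * (b j / ((j:ℕ):ℝ))
            = (fun i => v i * (b (m+2-i) / ((m+2-i:ℕ):ℝ))) (m+2-j) := by
        intro j hj
        simp only [Finset.mem_Ico] at hj
        have hinv : m+2-(m+2-j) = j := by omega
        simp only [hinv]
      rw [Finset.sum_congr rfl h0]
      have hR := Finset.sum_Ico_reflect
        (fun i => v i * (b (m+2-i) / ((m+2-i:ℕ):ℝ))) 1 (n := m+2) (m := m+2) (by omega)
      simpa using hR
    -- assemble
    have hext1 : ∑ j ∈ Finset.Ico 1 (m+1), v j * (b (m+2-j) / ((m+2-j:ℕ):ℝ))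
        ≤ ∑ j ∈ Finset.Ico 1 (m+2), v j * (b (m+2-j) / ((m+2-j:ℕ):ℝ)) := by
      apply Finset.sum_le_sum_of_subset_of_nonneg
      · apply Finset.Ico_subset_Ico le_rfl
        omega
      · intro i _ _
        exact mul_nonneg (hvnn i) (div_nonneg (hbnn _) (Nat.cast_nonneg _))
    have hext2 : ∑ j ∈ Finset.Ico 1 (m+1), v (m+2-j) * (b j / ((j:ℕ):ℝ))
        ≤ ∑ j ∈ Finset.Ico 1 (m+2), v (m+2-j) * (b j / ((j:ℕ):ℝ)) := by
      apply Finset.sum_le_sum_of_subset_of_nonneg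
      · apply Finset.Ico_subset_Ico le_rfl
        omega
      · intro i _ _
        exact mul_nonneg (hvnn _) (div_nonneg (hbnn _) (Nat.cast_nonneg _))
    have hmid_sum : ∑ j ∈ Finset.Ico 1 (m+1),
        ((|(s : ℝ)| * j - (s.sign : ℝ)) * γ j * γ (m+2-j))
          * (x0^(m+2) / (((m+2).factorial:ℕ):ℝ))
        ≤ 2 * ∑ j ∈ Finset.Ico 1 (m+2), v j * (b (m+2-j) / ((m+2-j:ℕ):ℝ)) := by
      calc ∑ j ∈ Finset.Ico 1 (m+1),
            ((|(s : ℝ)| * j - (s.sign : ℝ)) * γ j * γ (m+2-j))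
              * (x0^(m+2) / (((m+2).factorial:ℕ):ℝ))
          ≤ ∑ j ∈ Finset.Ico 1 (m+1),
              (v j * (b (m+2-j) / ((m+2-j:ℕ):ℝ)) + v (m+2-j) * (b j / ((j:ℕ):ℝ))) :=
            Finset.sum_le_sum hmidj
        _ = (∑ j ∈ Finset.Ico 1 (m+1), v j * (b (m+2-j) / ((m+2-j:ℕ):ℝ)))
            + ∑ j ∈ Finset.Ico 1 (m+1), v (m+2-j) * (b j / ((j:ℕ):ℝ)) :=
            Finset.sum_add_distrib
        _ ≤ (∑ j ∈ Finset.Ico 1 (m+2), v j * (b (m+2-j) / ((m+2-j:ℕ):ℝ)))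
            + ∑ j ∈ Finset.Ico 1 (m+2), v (m+2-j) * (b j / ((j:ℕ):ℝ)) :=
            add_le_add hext1 hext2
        _ = 2 * ∑ j ∈ Finset.Ico 1 (m+2), v j * (b (m+2-j) / ((m+2-j:ℕ):ℝ)) := by
            rw [hrefl]
            ring
    show b (m+2) ≤ εf (m+2) + C * b (m+2-1)
        + 2 * ∑ j ∈ Finset.Ico 1 (m+2), v j * (b (m+2-j) / ((m+2-j : ℕ) : ℝ))
    have hm21 : m+2-1 = m+1 := by omega
    rw [hm21, hbneq, hsum_split]
    linarith [hedge, hmid_sum]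
  have hb0 : b 0 = 0 := by rw [hbdef]; dsimp only; rw [ha0]; ring
  obtain ⟨B, hB⟩ := core_bound b εf v C F W hbnn hεnn hvnn hC0 hC1 hF hW hb0 H
  exact summable_of_sum_range_le hbnn hB
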